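/- Let G be a finite two-player turn-based game on a DAG with no chance nodes. Define capacities γ by: γ(root) = −∞, and for every non-root node s', γ(s') = min over edges (s, s') entering s' of c(s, s'), where c(s, s') = γ(s) if s is a leader node, and c(s, s') = max( γ(s), max_{s'' child of s, s'' ≠ s'} μ(s'') ) if s is a follower node. Then a terminal node z is a possible outcome — i.e., there exist a pure leader strategy π1 and a pure follower best response π2 to π1 whose induced play from the root reaches z — if and only if u2(z) ≥ γ(z). Consequently, the leader's Stackelberg value in pure strategies equals max{ u1(z) : z terminal, u2(z) ≥ γ(z) }. -/
import Mathlib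


open scoped BigOperators Classical

noncomputable section

/-- A finite two-player turn-based game on a DAG with no chance nodes: a finite set `V` of
nodes, a children map `succ` (a node is terminal iff it has no children), an owner for each
non-terminal node (`0` = leader, `1` = follower), utilities `u1`, `u2` at the terminal
nodes, a unique source `root` from which every node is reachable, and a rank function
witnessing acyclicity. -/
structure DAGGame (V : Type) [Fintype V] [DecidableEq V] where
  succ : V → Finset V
  owner : V → Fin 2
  u1 : V → ℝ
  u2 : V → ℝ
  root : V
  rank : V → ℕ
  rank_lt : ∀ v w, w ∈ succ v → rank w < rank v
  reachable : ∀ v, Relation.ReflTransGen (fun a b => b ∈ succ a) root v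

namespace DAGGame

variable {V : Type} [Fintype V] [DecidableEq V]

/-- A (memoryless) pure strategy: a choice of a child at every non-terminal node. -/
def Strat (G : DAGGame V) : Type :=
  { π : V → V // ∀ v, (G.succ v).Nonempty → π v ∈ G.succ v }

/-- The terminal node reached from `v` when the leader follows `π1` and the follower
follows `π2`. -/
def play (G : DAGGame V) (π1 π2 : G.Strat) (v : V) : V :=
  if h : (G.succ v).Nonempty then
    G.play π1 π2 (if G.owner v = 0 then π1.1 v else π2.1 v)
  else v
termination_by G.rank v
decreasing_by
  apply G.rank_lt
  split
  · exact π1.2 v h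
  · exact π2.2 v h

/-- `π2` is a best response of the follower to the leader strategy `π1`: it maximizes the
follower's utility against `π1`. -/
def BestResponse (G : DAGGame V) (π1 π2 : G.Strat) : Prop :=
  ∀ π2' : G.Strat, G.u2 (G.play π1 π2' G.root) ≤ G.u2 (G.play π1 π2 G.root)

variable {V : Type} [Fintype V] [DecidableEq V]

instance (G : DAGGame V) : Finite G.Strat := by
  unfold Strat; infer_instance

instance (G : DAGGame V) : Nonempty G.Strat :=
  ⟨⟨fun v => if h : (G.succ v).Nonempty then h.choose else v,
    fun v h => by simp only [dif_pos h]; exact h.choose_spec⟩⟩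

theorem play_eq (G : DAGGame V) (π1 π2 : G.Strat) (v : V) :
    G.play π1 π2 v = if h : (G.succ v).Nonempty then
      G.play π1 π2 (if G.owner v = 0 then π1.1 v else π2.1 v) else v := by
  rw [play]

theorem play_terminal (G : DAGGame V) (π1 π2 : G.Strat) (v : V) (h : G.succ v = ∅) :
    G.play π1 π2 v = v := by
  rw [play_eq, dif_neg]
  simp [h]

/-- Strong induction on rank. -/
theorem rank_ind (G : DAGGame V) (P : V → Prop)
    (h : ∀ v, (∀ w, G.rank w < G.rank v → P w) → P v) : ∀ v, P v := by
  have H : ∀ n v, G.rank v < n → P v := by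
    intro n
    induction n with
    | zero => intro v hv; exact absurd hv (Nat.not_lt_zero _)
    | succ n ih => intro v hv; exact h v (fun w hw => ih w (by omega))
  exact fun v => H (G.rank v + 1) v (Nat.lt_succ_self _)

theorem play_succ_empty (G : DAGGame V) (π1 π2 : G.Strat) (v : V) :
    G.succ (G.play π1 π2 v) = ∅ := by
  induction v using G.rank_ind with
  | h v ih =>
    rw [play_eq]
    split
    · rename_i h
      apply ih
      apply G.rank_lt
      split
      · exact π1.2 v h
      · exact π2.2 v h
    · rename_i h
      exact Finset.not_nonempty_iff_eq_empty.mp h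
/-- The play from `v` only depends on strategy values at nodes of rank ≤ rank v. -/
theorem play_agree (G : DAGGame V) (π1 π1' π2 π2' : G.Strat) :
    ∀ v : V, (∀ u, G.rank u ≤ G.rank v → π1.1 u = π1'.1 u ∧ π2.1 u = π2'.1 u) →
      G.play π1 π2 v = G.play π1' π2' v := by
  intro v
  induction v using G.rank_ind with
  | h v ih =>
    intro hagree
    rw [play_eq, play_eq (π1 := π1') (π2 := π2')]
    split
    · rename_i h
      have hv := hagree v le_rfl
      have hnext : (if G.owner v = 0 then π1.1 v else π2.1 v)
          = (if G.owner v = 0 then π1'.1 v else π2'.1 v) := by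
        split <;> simp [hv.1, hv.2]
      rw [← hnext]
      have hrank : G.rank (if G.owner v = 0 then π1.1 v else π2.1 v) < G.rank v := by
        apply G.rank_lt
        split
        · exact π1.2 v h
        · exact π2.2 v h
      exact ih _ hrank (fun u hu => hagree u (le_trans hu (le_of_lt hrank)))
    · rfl

theorem rank_le_root (G : DAGGame V) (v : V) : G.rank v ≤ G.rank G.root := by
  have := G.reachable v
  induction this with
  | refl => exact le_rfl
  | tail _ hstep ih => exact le_trans (le_of_lt (G.rank_lt _ _ hstep)) ih
/-- The set of follower payoffs achievable against `π1` from `v`. -/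
def S2 (G : DAGGame V) (π1 : G.Strat) (v : V) : Set ℝ :=
  {y | ∃ π2 : G.Strat, y = G.u2 (G.play π1 π2 v)}

theorem S2_finite (G : DAGGame V) (π1 : G.Strat) (v : V) : (G.S2 π1 v).Finite := by
  have : G.S2 π1 v ⊆ Set.range (fun π2 : G.Strat => G.u2 (G.play π1 π2 v)) := by
    rintro y ⟨π2, rfl⟩; exact ⟨π2, rfl⟩
  exact (Set.finite_range _).subset this

theorem S2_nonempty (G : DAGGame V) (π1 : G.Strat) (v : V) : (G.S2 π1 v).Nonempty := by
  obtain ⟨π2⟩ := (inferInstance : Nonempty G.Strat)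
  exact ⟨_, π2, rfl⟩

def S1 (G : DAGGame V) (v : V) : Set ℝ :=
  {x | ∃ π1 : G.Strat, x = sSup {y : ℝ | ∃ π2 : G.Strat, y = G.u2 (G.play π1 π2 v)}}

theorem S1_finite (G : DAGGame V) (v : V) : (G.S1 v).Finite := by
  have : G.S1 v ⊆ Set.range (fun π1 : G.Strat =>
      sSup {y : ℝ | ∃ π2 : G.Strat, y = G.u2 (G.play π1 π2 v)}) := by
    rintro y ⟨π1, rfl⟩; exact ⟨π1, rfl⟩
  exact (Set.finite_range _).subset this

theorem S1_nonempty (G : DAGGame V) (v : V) : (G.S1 v).Nonempty := by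
  obtain ⟨π1⟩ := (inferInstance : Nonempty G.Strat)
  exact ⟨_, π1, rfl⟩

/-- F3 : each payoff is ≤ the sup. -/
theorem le_sSup_S2 (G : DAGGame V) (v : V) (π1 π2 : G.Strat) :
    G.u2 (G.play π1 π2 v) ≤ sSup (G.S2 π1 v) :=
  le_csSup (G.S2_finite π1 v).bddAbove ⟨π2, rfl⟩

section MuFacts

variable (G : DAGGame V) (μ : V → ℝ)
  (hμ : ∀ v, μ v =
      sInf {x : ℝ | ∃ π1 : G.Strat,
        x = sSup {y : ℝ | ∃ π2 : G.Strat, y = G.u2 (G.play π1 π2 v)}})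

include hμ

/-- F1 : μ v ≤ the sup of follower payoffs against any fixed π1. -/
theorem mu_le_sSup (v : V) (π1 : G.Strat) : μ v ≤ sSup (G.S2 π1 v) := by
  rw [hμ v]
  exact csInf_le (G.S1_finite v).bddBelow ⟨π1, rfl⟩

/-- F2 : the inf is attained. -/
theorem exists_pi1_mu (v : V) : ∃ π1 : G.Strat, μ v = sSup (G.S2 π1 v) := by
  obtain ⟨π1, h⟩ := (G.S1_nonempty v).csInf_mem (G.S1_finite v)
  exact ⟨π1, by rw [hμ v]; exact h⟩

/-- F0 : at a terminal node, μ v = u2 v. -/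
theorem mu_terminal (v : V) (h : G.succ v = ∅) : μ v = G.u2 v := by
  have hS2 : ∀ π1 : G.Strat, G.S2 π1 v = {G.u2 v} := by
    intro π1
    ext y
    simp only [S2, Set.mem_setOf_eq, Set.mem_singleton_iff]
    constructor
    · rintro ⟨π2, rfl⟩; rw [G.play_terminal _ _ _ h]
    · rintro rfl
      obtain ⟨π2⟩ := (inferInstance : Nonempty G.Strat)
      exact ⟨π2, by rw [G.play_terminal _ _ _ h]⟩
  have hS1 : G.S1 v = {G.u2 v} := by
    ext x
    simp only [S1, Set.mem_setOf_eq, Set.mem_singleton_iff]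
    constructor
    · rintro ⟨π1, rfl⟩
      rw [show {y : ℝ | ∃ π2 : G.Strat, y = G.u2 (G.play π1 π2 v)} = G.S2 π1 v from rfl,
        hS2 π1, csSup_singleton]
    · rintro rfl
      obtain ⟨π1⟩ := (inferInstance : Nonempty G.Strat)
      exact ⟨π1, by rw [show {y : ℝ | ∃ π2 : G.Strat, y = G.u2 (G.play π1 π2 v)} = G.S2 π1 v from rfl, hS2 π1, csSup_singleton]⟩
  rw [hμ v, show {x : ℝ | ∃ π1 : G.Strat,
        x = sSup {y : ℝ | ∃ π2 : G.Strat, y = G.u2 (G.play π1 π2 v)}} = G.S1 v from rfl,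
    hS1, csInf_singleton]

end MuFacts
section MuFacts2

variable (G : DAGGame V) (μ : V → ℝ)
  (hμ : ∀ v, μ v =
      sInf {x : ℝ | ∃ π1 : G.Strat,
        x = sSup {y : ℝ | ∃ π2 : G.Strat, y = G.u2 (G.play π1 π2 v)}})

include hμ

/-- F4 : at a leader node, some child has μ ≤ μ v. -/
theorem exists_child_mu_le (v : V) (h : (G.succ v).Nonempty) (ho : G.owner v = 0) :
    ∃ w ∈ G.succ v, μ w ≤ μ v := by
  obtain ⟨π1, hv⟩ := G.exists_pi1_mu μ hμ v
  refine ⟨π1.1 v, π1.2 v h, ?_⟩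
  have hset : G.S2 π1 v = G.S2 π1 (π1.1 v) := by
    unfold S2
    have : ∀ π2 : G.Strat, G.play π1 π2 v = G.play π1 π2 (π1.1 v) := by
      intro π2
      rw [play_eq, dif_pos h, if_pos ho]
    simp only [this]
  calc μ (π1.1 v) ≤ sSup (G.S2 π1 (π1.1 v)) := G.mu_le_sSup μ hμ _ π1
    _ = sSup (G.S2 π1 v) := by rw [hset]
    _ = μ v := hv.symm

/-- F5 : at a follower node, every child has μ ≤ μ v. -/
theorem child_mu_le (v : V) (h : (G.succ v).Nonempty) (ho : G.owner v ≠ 0)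
    (w : V) (hw : w ∈ G.succ v) : μ w ≤ μ v := by
  obtain ⟨π1, hv⟩ := G.exists_pi1_mu μ hμ v
  have hrw : G.rank w < G.rank v := G.rank_lt v w hw
  have key : sSup (G.S2 π1 w) ≤ sSup (G.S2 π1 v) := by
    apply csSup_le (G.S2_nonempty π1 w)
    rintro y ⟨π2, rfl⟩
    set π2' : G.Strat := ⟨fun u => if u = v then w else π2.1 u, by
      intro u hu
      by_cases huv : u = v
      · subst huv; simpa using hw
      · simpa [huv] using π2.2 u hu⟩ with hπ2'
    have h1 : G.play π1 π2 w = G.play π1 π2' w := by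
      apply G.play_agree
      intro u hu
      refine ⟨rfl, ?_⟩
      have : u ≠ v := by
        intro he; subst he; omega
      simp [hπ2', this]
    have h2 : G.play π1 π2' v = G.play π1 π2' w := by
      rw [play_eq, dif_pos h, if_neg ho]
      simp [hπ2']
    rw [h1, ← h2]
    exact G.le_sSup_S2 v π1 π2'
  calc μ w ≤ sSup (G.S2 π1 w) := G.mu_le_sSup μ hμ _ π1
    _ ≤ sSup (G.S2 π1 v) := key
    _ = μ v := hv.symm

end MuFacts2
section Dir1

variable (G : DAGGame V) (μ : V → ℝ)
  (hμ : ∀ v, μ v =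
      sInf {x : ℝ | ∃ π1 : G.Strat,
        x = sSup {y : ℝ | ∃ π2 : G.Strat, y = G.u2 (G.play π1 π2 v)}})
  (γ : V → EReal)
  (hγroot : γ G.root = ⊥)
  (hγ : ∀ s' : V, s' ≠ G.root → γ s' =
      sInf {c : EReal | ∃ s : V, s' ∈ G.succ s ∧ c =
        if G.owner s = 0 then γ s
        else max (γ s)
          (sSup {x : EReal | ∃ s'' ∈ G.succ s, s'' ≠ s' ∧ x = ((μ s'' : ℝ) : EReal)})})

include hμ hγroot hγ in
theorem capacity_of_outcome (z : V) (π1 π2 : G.Strat)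
    (hbr : G.BestResponse π1 π2) (hplay : G.play π1 π2 G.root = z) :
    γ z ≤ ((G.u2 z : ℝ) : EReal) := by
  classical
  set g : V → V := fun v => if h : (G.succ v).Nonempty then
      (if G.owner v = 0 then π1.1 v else π2.1 v) else v with hg
  have g1 : ∀ v, (G.succ v).Nonempty → g v ∈ G.succ v := by
    intro v h
    rw [hg]
    simp only [dif_pos h]
    split
    · exact π1.2 v h
    · exact π2.2 v h
  have g2 : ∀ v, G.rank (g v) ≤ G.rank v := by
    intro v
    by_cases h : (G.succ v).Nonempty
    · exact le_of_lt (G.rank_lt v _ (g1 v h))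
    · have hgv : g v = v := by rw [hg]; exact dif_neg h
      rw [hgv]
  have g3 : ∀ v, G.play π1 π2 v = G.play π1 π2 (g v) := by
    intro v
    by_cases h : (G.succ v).Nonempty
    · have hgv : g v = if G.owner v = 0 then π1.1 v else π2.1 v := by
        rw [hg]; exact dif_pos h
      rw [play_eq, dif_pos h, hgv]
    · have hgv : g v = v := by rw [hg]; exact dif_neg h
      rw [hgv]
  have g4 : ∃ N, g^[N] G.root = z := by
    have : ∀ v, ∃ n, g^[n] v = G.play π1 π2 v := by
      intro v
      induction v using G.rank_ind with
      | h v ih =>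
        by_cases h : (G.succ v).Nonempty
        · obtain ⟨n, hn⟩ := ih (g v) (G.rank_lt v _ (g1 v h))
          exact ⟨n + 1, by rw [Function.iterate_succ_apply, hn, ← g3]⟩
        · refine ⟨0, ?_⟩
          rw [Function.iterate_zero_apply,
            G.play_terminal π1 π2 v (Finset.not_nonempty_iff_eq_empty.mp h)]
    obtain ⟨n, hn⟩ := this G.root
    exact ⟨n, by rw [hn, hplay]⟩
  -- monotonicity of rank along iterates
  have g5 : ∀ m n, m ≤ n → G.rank (g^[n] G.root) ≤ G.rank (g^[m] G.root) := by
    intro m n hmn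
    induction n with
    | zero =>
      have hm0 : m = 0 := Nat.le_zero.mp hmn
      subst hm0; exact le_rfl
    | succ n ih =>
      rcases Nat.lt_or_ge m (n+1) with h | h
      · calc G.rank (g^[n+1] G.root) ≤ G.rank (g^[n] G.root) := by
              rw [Function.iterate_succ_apply']; exact g2 _
          _ ≤ _ := ih (by omega)
      · have : m = n + 1 := by omega
        subst this; exact le_rfl
  have g5a : ∀ m n, m ≤ n → ¬(G.succ (g^[m] G.root)).Nonempty → g^[n] G.root = g^[m] G.root := by
    intro m n hmn hterm
    induction n with
    | zero => have : m = 0 := by omega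
              subst this; rfl
    | succ n ih =>
      rcases Nat.lt_or_ge m (n+1) with h | h
      · have hn := ih (by omega)
        have hgv : g (g^[m] G.root) = g^[m] G.root := by rw [hg]; exact dif_neg hterm
        rw [Function.iterate_succ_apply', hn, hgv]
      · have : m = n + 1 := by omega
        subst this; rfl
  have g5b : ∀ m n, m < n → (G.succ (g^[n] G.root)).Nonempty →
      G.rank (g^[n] G.root) < G.rank (g^[m] G.root) := by
    intro m n hmn hterm
    by_cases hm : (G.succ (g^[m] G.root)).Nonempty
    · calc G.rank (g^[n] G.root) ≤ G.rank (g^[m+1] G.root) := g5 _ _ (by omega)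
        _ < G.rank (g^[m] G.root) := by
            rw [Function.iterate_succ_apply']
            exact G.rank_lt _ _ (g1 _ hm)
    · rw [g5a m n (by omega) hm] at hterm
      exact absurd hterm hm
  -- main induction
  have H : ∀ n, γ (g^[n] G.root) ≤ ((G.u2 z : ℝ) : EReal) := by
    intro n
    induction n with
    | zero => simp [hγroot]
    | succ n IH =>
      set v := g^[n] G.root with hv
      by_cases hterm : (G.succ v).Nonempty
      · have hstep : g^[n+1] G.root = g v := by rw [Function.iterate_succ_apply', hv]
        have hmem : g v ∈ G.succ v := g1 v hterm
        have hne : g v ≠ G.root := by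
          intro he
          have h1 : G.rank (g v) < G.rank v := G.rank_lt v _ hmem
          have h2 : G.rank v ≤ G.rank G.root := G.rank_le_root v
          rw [he] at h1; omega
        rw [hstep, hγ (g v) hne]
        have hmem2 : (if G.owner v = 0 then γ v
            else max (γ v) (sSup {x : EReal | ∃ s'' ∈ G.succ v, s'' ≠ g v ∧
              x = ((μ s'' : ℝ) : EReal)})) ∈
            {c : EReal | ∃ s : V, g v ∈ G.succ s ∧ c =
              if G.owner s = 0 then γ s
              else max (γ s) (sSup {x : EReal | ∃ s'' ∈ G.succ s, s'' ≠ g v ∧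
                x = ((μ s'' : ℝ) : EReal)})} := ⟨v, hmem, rfl⟩
        refine le_trans (sInf_le hmem2) ?_
        by_cases ho : G.owner v = 0
        · rw [if_pos ho]; exact IH
        · rw [if_neg ho]
          refine max_le IH (sSup_le ?_)
          rintro x ⟨s'', hs'', hnes, rfl⟩
          rw [EReal.coe_le_coe_iff]
          -- μ s'' ≤ u2 z via deviation
          have hrs : G.rank s'' < G.rank v := G.rank_lt v s'' hs''
          have key : ∀ σ : G.Strat, G.u2 (G.play π1 σ s'') ≤ G.u2 z := by
            intro σ
            set π2' : G.Strat := ⟨fun u => if G.rank u < G.rank v then σ.1 u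
                else if u = v then s'' else π2.1 u, by
              intro u hu
              by_cases h1 : G.rank u < G.rank v
              · simpa [h1] using σ.2 u hu
              · by_cases h2 : u = v
                · subst h2; simpa [h1] using hs''
                · simpa [h1, h2] using π2.2 u hu⟩ with hπ2'
            have hA : G.play π1 π2' s'' = G.play π1 σ s'' := by
              apply G.play_agree
              intro u hu
              refine ⟨rfl, ?_⟩
              have : G.rank u < G.rank v := by omega
              simp [hπ2', this]
            have hB : G.play π1 π2' v = G.play π1 π2' s'' := by
              rw [play_eq, dif_pos hterm, if_neg ho]
              have : π2'.1 v = s'' := by simp [hπ2']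
              rw [this]
            have hC : ∀ m, m ≤ n → G.play π1 π2' (g^[m] G.root) = G.play π1 π2' G.root := by
              intro m
              induction m with
              | zero => intro _; rfl
              | succ m ihm =>
                intro hmn
                set u := g^[m] G.root with hu
                have hunt : (G.succ u).Nonempty := by
                  by_contra hcon
                  have h9 := g5a m n (by omega) hcon
                  rw [← hv] at h9
                  rw [h9] at hterm
                  exact hcon hterm
                have hrk1 : G.rank v < G.rank u := by
                  have := g5b m n (by omega) (by rw [← hv]; exact hterm)
                  rw [← hv] at this; exact this
                have hgu : g u = if G.owner u = 0 then π1.1 u else π2.1 u := by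
                  rw [hg]; exact dif_pos hunt
                have hstep2 : G.play π1 π2' u = G.play π1 π2' (g u) := by
                  rw [play_eq, dif_pos hunt]
                  congr 1
                  rw [hgu]
                  by_cases hou : G.owner u = 0
                  · rw [if_pos hou, if_pos hou]
                  · rw [if_neg hou, if_neg hou]
                    have h1 : ¬ G.rank u < G.rank v := by omega
                    have h2 : u ≠ v := by intro he; rw [he] at hrk1; omega
                    simp [hπ2', h1, h2]
                calc G.play π1 π2' (g^[m+1] G.root)
                    = G.play π1 π2' (g u) := by rw [Function.iterate_succ_apply', hu]
                  _ = G.play π1 π2' u := hstep2.symm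
                  _ = G.play π1 π2' G.root := ihm (by omega)
            have hD : G.u2 (G.play π1 π2' G.root) ≤ G.u2 z := by
              calc G.u2 (G.play π1 π2' G.root) ≤ G.u2 (G.play π1 π2 G.root) := hbr π2'
                _ = G.u2 z := by rw [hplay]
            calc G.u2 (G.play π1 σ s'') = G.u2 (G.play π1 π2' s'') := by rw [hA]
              _ = G.u2 (G.play π1 π2' v) := by rw [hB]
              _ = G.u2 (G.play π1 π2' G.root) := by rw [hv, hC n le_rfl]
              _ ≤ G.u2 z := hD
          calc μ s'' ≤ sSup (G.S2 π1 s'') := G.mu_le_sSup μ hμ s'' π1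
            _ ≤ G.u2 z := csSup_le (G.S2_nonempty π1 s'') (by rintro y ⟨σ, rfl⟩; exact key σ)
      · have hstep : g^[n+1] G.root = v := by
          rw [Function.iterate_succ_apply', ← hv, hg]
          simp only [dif_neg hterm]
        rw [hstep]; exact IH
  obtain ⟨N, hN⟩ := g4
  have := H N
  rw [hN] at this
  exact this

end Dir1
section Dir2

variable (G : DAGGame V) (μ : V → ℝ) (γ : V → EReal)

/-- Path extraction: if `γ v ≤ B` then there is a path from the root to `v` along which
every off-path sibling at a follower node has `μ ≤ B`. -/
theorem exists_goodPath
    (hγ : ∀ s' : V, s' ≠ G.root → γ s' =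
      sInf {c : EReal | ∃ s : V, s' ∈ G.succ s ∧ c =
        if G.owner s = 0 then γ s
        else max (γ s)
          (sSup {x : EReal | ∃ s'' ∈ G.succ s, s'' ≠ s' ∧ x = ((μ s'' : ℝ) : EReal)})})
    (B : ℝ) :
    ∀ v : V, γ v ≤ (B : EReal) →
      ∃ k : ℕ, ∃ w : ℕ → V, w 0 = G.root ∧ w k = v ∧
        (∀ j, j < k → w (j+1) ∈ G.succ (w j)) ∧
        (∀ j, j < k → G.owner (w j) ≠ 0 →
          ∀ s'' ∈ G.succ (w j), s'' ≠ w (j+1) → μ s'' ≤ B) := by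
  have H : ∀ n : ℕ, ∀ v : V, G.rank G.root - G.rank v < n → γ v ≤ (B : EReal) →
      ∃ k : ℕ, ∃ w : ℕ → V, w 0 = G.root ∧ w k = v ∧
        (∀ j, j < k → w (j+1) ∈ G.succ (w j)) ∧
        (∀ j, j < k → G.owner (w j) ≠ 0 →
          ∀ s'' ∈ G.succ (w j), s'' ≠ w (j+1) → μ s'' ≤ B) := by
    intro n
    induction n with
    | zero => intro v hv; exact absurd hv (Nat.not_lt_zero _)
    | succ n ih =>
      intro v hv hγv
      by_cases hroot : v = G.root
      · subst hroot
        exact ⟨0, fun _ => G.root, rfl, rfl, by omega, by omega⟩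
      · -- v has a parent realizing the inf
        set Sv : Set EReal := {c : EReal | ∃ s : V, v ∈ G.succ s ∧ c =
          if G.owner s = 0 then γ s
          else max (γ s)
            (sSup {x : EReal | ∃ s'' ∈ G.succ s, s'' ≠ v ∧ x = ((μ s'' : ℝ) : EReal)})}
          with hSv
        have hfin : Sv.Finite := by
          have : Sv ⊆ Set.range (fun s : V => if G.owner s = 0 then γ s
              else max (γ s)
                (sSup {x : EReal | ∃ s'' ∈ G.succ s, s'' ≠ v ∧ x = ((μ s'' : ℝ) : EReal)})) := by
            rintro c ⟨s, _, rfl⟩; exact ⟨s, rfl⟩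
          exact (Set.finite_range _).subset this
        have hne : Sv.Nonempty := by
          rcases (G.reachable v).cases_tail with h | ⟨s, _, hs⟩
          · exact absurd h hroot
          · exact ⟨_, s, hs, rfl⟩
        have hmem := hne.csInf_mem hfin
        obtain ⟨s, hvs, hFs⟩ := hmem
        have hFsB : (if G.owner s = 0 then γ s
            else max (γ s)
              (sSup {x : EReal | ∃ s'' ∈ G.succ s, s'' ≠ v ∧ x = ((μ s'' : ℝ) : EReal)}))
            ≤ (B : EReal) := by
          rw [← hFs]
          rw [hγ v hroot, ← hSv] at hγv
          exact hγv
        have hrk : G.rank v < G.rank s := G.rank_lt s v hvs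
        have hrks : G.rank s ≤ G.rank G.root := G.rank_le_root s
        have hmeas : G.rank G.root - G.rank s < n := by omega
        have hγs : γ s ≤ (B : EReal) := by
          by_cases ho : G.owner s = 0
          · rw [if_pos ho] at hFsB; exact hFsB
          · rw [if_neg ho] at hFsB; exact le_trans (le_max_left _ _) hFsB
        obtain ⟨k, w, h0, hk, hedge, hfol⟩ := ih s hmeas hγs
        set w' : ℕ → V := fun j => if j = k + 1 then v else w j with hw'
        have hw'a : ∀ j, j ≠ k + 1 → w' j = w j := by
          intro j hj; rw [hw']; exact if_neg hj
        have hw'b : w' (k + 1) = v := by rw [hw']; exact if_pos rfl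
        refine ⟨k + 1, w', ?_, hw'b, ?_, ?_⟩
        · rw [hw'a 0 (by omega)]; exact h0
        · intro j hj
          rcases Nat.lt_or_ge j k with h | h
          · rw [hw'a j (by omega), hw'a (j+1) (by omega)]
            exact hedge j h
          · have hjk : j = k := by omega
            subst hjk
            rw [hw'a j (by omega), hw'b, hk]
            exact hvs
        · intro j hj hoj s'' hs'' hnes
          rcases Nat.lt_or_ge j k with h | h
          · rw [hw'a j (by omega)] at hoj hs''
            rw [hw'a (j+1) (by omega)] at hnes
            exact hfol j h hoj s'' hs'' hnes
          · have hjk : j = k := by omega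
            subst hjk
            rw [hw'a j (by omega), hk] at hoj hs''
            rw [hw'b] at hnes
            rw [if_neg hoj] at hFsB
            have hsup : sSup {x : EReal | ∃ s''' ∈ G.succ s, s''' ≠ v ∧
                x = ((μ s''' : ℝ) : EReal)} ≤ (B : EReal) :=
              le_trans (le_max_right _ _) hFsB
            have hmemx : ((μ s'' : ℝ) : EReal) ∈ {x : EReal | ∃ t ∈ G.succ s, t ≠ v ∧
                x = ((μ t : ℝ) : EReal)} := ⟨s'', hs'', hnes, rfl⟩
            have : ((μ s'' : ℝ) : EReal) ≤ (B : EReal) :=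
              le_trans (le_sSup hmemx) hsup
            exact EReal.coe_le_coe_iff.mp this
  exact fun v hv => H (G.rank G.root - G.rank v + 1) v (Nat.lt_succ_self _) hv

end Dir2
section Dir2b

variable (G : DAGGame V) (μ : V → ℝ)
  (hμ : ∀ v, μ v =
      sInf {x : ℝ | ∃ π1 : G.Strat,
        x = sSup {y : ℝ | ∃ π2 : G.Strat, y = G.u2 (G.play π1 π2 v)}})

include hμ in
theorem outcome_of_goodPath (z : V) (hz : G.succ z = ∅)
    (k : ℕ) (w : ℕ → V) (h0 : w 0 = G.root) (hk : w k = z)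
    (hedge : ∀ j, j < k → w (j+1) ∈ G.succ (w j))
    (hfol : ∀ j, j < k → G.owner (w j) ≠ 0 →
      ∀ s'' ∈ G.succ (w j), s'' ≠ w (j+1) → μ s'' ≤ G.u2 z) :
    ∃ π1 π2 : G.Strat, G.BestResponse π1 π2 ∧ G.play π1 π2 G.root = z := by
  classical
  -- ranks strictly decrease along the path, so path positions are unique
  have hmono : ∀ j, j ≤ k → ∀ i, i < j → G.rank (w j) < G.rank (w i) := by
    intro j
    induction j with
    | zero => intro _ i hi; exact absurd hi (Nat.not_lt_zero _)
    | succ j ihj =>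
      intro hjk i hi
      have h1 : G.rank (w (j+1)) < G.rank (w j) :=
        G.rank_lt _ _ (hedge j (by omega))
      rcases Nat.lt_or_ge i j with h | h
      · exact lt_trans h1 (ihj (by omega) i h)
      · have : i = j := by omega
        subst this; exact h1
  have huniq : ∀ i j, i ≤ k → j ≤ k → w i = w j → i = j := by
    intro i j hi hj he
    rcases Nat.lt_trichotomy i j with h | h | h
    · have := hmono j hj i h; rw [he] at this; omega
    · exact h
    · have := hmono i hi j h; rw [he] at this; omega
  -- punishing choice: a μ-minimal child
  have hpun : ∀ v : V, (G.succ v).Nonempty → ∃ m ∈ G.succ v, ∀ b ∈ G.succ v, μ m ≤ μ b :=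
    fun v h => Finset.exists_min_image (G.succ v) μ h
  set pun : V → V := fun v => if h : (G.succ v).Nonempty then (hpun v h).choose else v
    with hpundef
  have hpun1 : ∀ v (h : (G.succ v).Nonempty), pun v ∈ G.succ v := by
    intro v h
    have : pun v = (hpun v h).choose := by rw [hpundef]; exact dif_pos h
    rw [this]
    exact (hpun v h).choose_spec.1
  have hpun2 : ∀ v (h : (G.succ v).Nonempty), ∀ b ∈ G.succ v, μ (pun v) ≤ μ b := by
    intro v h
    have : pun v = (hpun v h).choose := by rw [hpundef]; exact dif_pos h
    rw [this]
    exact (hpun v h).choose_spec.2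
  -- path-following strategy function
  set f : V → V := fun v => if h : ∃ j, j < k ∧ w j = v then w (h.choose + 1) else pun v
    with hfdef
  have hf : ∀ v, (G.succ v).Nonempty → f v ∈ G.succ v := by
    intro v hv
    by_cases h : ∃ j, j < k ∧ w j = v
    · have : f v = w (h.choose + 1) := by rw [hfdef]; exact dif_pos h
      rw [this]
      obtain ⟨hlt, heq⟩ := h.choose_spec
      have hmem := hedge _ hlt
      rw [heq] at hmem
      exact hmem
    · have : f v = pun v := by rw [hfdef]; exact dif_neg h
      rw [this]
      exact hpun1 v hv
  set π1 : G.Strat := ⟨f, hf⟩ with hπ1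
  have hfv : ∀ j, j < k → f (w j) = w (j + 1) := by
    intro j hj
    have h : ∃ i, i < k ∧ w i = w j := ⟨j, hj, rfl⟩
    have h1 : f (w j) = w (h.choose + 1) := by rw [hfdef]; exact dif_pos h
    obtain ⟨hlt, heq⟩ := h.choose_spec
    have : h.choose = j := huniq _ _ (by omega) (by omega) heq
    rw [h1, this]
  have hfoff : ∀ v, ¬(∃ j, j ≤ k ∧ w j = v) → f v = pun v := by
    intro v hv
    have h : ¬∃ j, j < k ∧ w j = v := by
      rintro ⟨j, hj, he⟩; exact hv ⟨j, by omega, he⟩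
    rw [hfdef]; exact dif_neg h
  -- main claim
  have MC : ∀ n : ℕ, ∀ v : V, G.rank v < n → ∀ π2' : G.Strat,
      ((∃ j, j ≤ k ∧ w j = v) → G.u2 (G.play π1 π2' v) ≤ G.u2 z) ∧
      (¬(∃ j, j ≤ k ∧ w j = v) → G.u2 (G.play π1 π2' v) ≤ max (μ v) (G.u2 z)) := by
    intro n
    induction n with
    | zero => intro v hv; exact absurd hv (Nat.not_lt_zero _)
    | succ n ih =>
      intro v hv π2'
      by_cases hterm : (G.succ v).Nonempty
      · -- non-terminal
        have hplay : G.play π1 π2' v =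
            G.play π1 π2' (if G.owner v = 0 then π1.1 v else π2'.1 v) := by
          rw [play_eq, dif_pos hterm]
        constructor
        · rintro ⟨j, hjk, hwj⟩
          have hjlt : j < k := by
            rcases Nat.lt_or_ge j k with h | h
            · exact h
            · have : j = k := by omega
              subst this
              rw [hwj] at hk
              rw [← hk] at hz
              rw [hz] at hterm
              exact absurd hterm (by simp)
          by_cases ho : G.owner v = 0
          · have hnx : π1.1 v = w (j + 1) := by
              rw [hπ1]
              show f v = w (j + 1)
              rw [← hwj]
              exact hfv j hjlt
            rw [hplay, if_pos ho, hnx]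
            have hrk : G.rank (w (j+1)) < G.rank v := by
              rw [← hwj]; exact G.rank_lt _ _ (hedge j hjlt)
            exact (ih (w (j+1)) (by omega) π2').1 ⟨j+1, by omega, rfl⟩
          · have hnmem : π2'.1 v ∈ G.succ v := π2'.2 v hterm
            have hrk : G.rank (π2'.1 v) < G.rank v := G.rank_lt _ _ hnmem
            rw [hplay, if_neg ho]
            by_cases hon : ∃ i, i ≤ k ∧ w i = π2'.1 v
            · exact (ih _ (by omega) π2').1 hon
            · have hne2 : π2'.1 v ≠ w (j + 1) := by
                intro he; exact hon ⟨j+1, by omega, he.symm⟩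
              have hμb : μ (π2'.1 v) ≤ G.u2 z := by
                apply hfol j hjlt (by rw [hwj]; exact ho) _ (by rw [hwj]; exact hnmem) hne2
              have := (ih _ (by omega) π2').2 hon
              calc G.u2 (G.play π1 π2' (π2'.1 v)) ≤ max (μ (π2'.1 v)) (G.u2 z) := this
                _ ≤ G.u2 z := max_le hμb le_rfl
        · intro hoff
          by_cases ho : G.owner v = 0
          · have hnx : π1.1 v = pun v := by
              rw [hπ1]
              show f v = pun v
              exact hfoff v hoff
            have hmem : pun v ∈ G.succ v := hpun1 v hterm
            have hrk : G.rank (pun v) < G.rank v := G.rank_lt _ _ hmem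
            have hμp : μ (pun v) ≤ μ v := by
              obtain ⟨c, hc, hcle⟩ := G.exists_child_mu_le μ hμ v hterm ho
              exact le_trans (hpun2 v hterm c hc) hcle
            rw [hplay, if_pos ho, hnx]
            by_cases hon : ∃ i, i ≤ k ∧ w i = pun v
            · exact le_trans ((ih _ (by omega) π2').1 hon) (le_max_right _ _)
            · have := (ih _ (by omega) π2').2 hon
              calc G.u2 (G.play π1 π2' (pun v)) ≤ max (μ (pun v)) (G.u2 z) := this
                _ ≤ max (μ v) (G.u2 z) := max_le_max hμp le_rfl
          · have hnmem : π2'.1 v ∈ G.succ v := π2'.2 v hterm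
            have hrk : G.rank (π2'.1 v) < G.rank v := G.rank_lt _ _ hnmem
            have hμp : μ (π2'.1 v) ≤ μ v := G.child_mu_le μ hμ v hterm ho _ hnmem
            rw [hplay, if_neg ho]
            by_cases hon : ∃ i, i ≤ k ∧ w i = π2'.1 v
            · exact le_trans ((ih _ (by omega) π2').1 hon) (le_max_right _ _)
            · have := (ih _ (by omega) π2').2 hon
              calc G.u2 (G.play π1 π2' (π2'.1 v)) ≤ max (μ (π2'.1 v)) (G.u2 z) := this
                _ ≤ max (μ v) (G.u2 z) := max_le_max hμp le_rfl
      · -- terminal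
        have hsv : G.succ v = ∅ := Finset.not_nonempty_iff_eq_empty.mp hterm
        have hplay : G.play π1 π2' v = v := G.play_terminal _ _ _ hsv
        constructor
        · rintro ⟨j, hjk, hwj⟩
          have hjq : j = k := by
            rcases Nat.lt_or_ge j k with h | h
            · exfalso
              have := hedge j h
              rw [hwj] at this
              have : (G.succ v).Nonempty := ⟨_, this⟩
              exact hterm this
            · omega
          subst hjq
          rw [hplay, ← hwj, hk]
        · intro _
          rw [hplay]
          have : μ v = G.u2 v := G.mu_terminal μ hμ v hsv
          rw [← this]
          exact le_max_left _ _
  -- the follower also follows the path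
  have PC : ∀ d j, j + d = k → G.play π1 π1 (w j) = z := by
    intro d
    induction d with
    | zero =>
      intro j hj
      have : j = k := by omega
      subst this
      rw [hk]
      exact G.play_terminal _ _ _ hz
    | succ d ihd =>
      intro j hj
      have hjlt : j < k := by omega
      have hterm : (G.succ (w j)).Nonempty := ⟨_, hedge j hjlt⟩
      have : G.play π1 π1 (w j) = G.play π1 π1 (w (j+1)) := by
        rw [play_eq, dif_pos hterm]
        congr 1
        have h1 : π1.1 (w j) = w (j+1) := hfv j hjlt
        rw [h1, ite_self]
      rw [this]
      exact ihd (j+1) (by omega)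
  have hroot : G.play π1 π1 G.root = z := by
    rw [← h0]
    exact PC k 0 (by omega)
  refine ⟨π1, π1, ?_, hroot⟩
  intro π2'
  rw [hroot]
  have := (MC (G.rank G.root + 1) G.root (Nat.lt_succ_self _) π2').1 ⟨0, by omega, h0⟩
  exact this

end Dir2b
/-- Let `μ` be the follower's minmax value of the sub-DAG of each node
(the follower's value of the zero-sum game in which the leader minimizes the follower's
utility and the follower best responds) and let the capacities `γ` satisfy
`γ(root) = −∞` and, for every non-root node `s'`,
`γ(s') = min over edges (s, s') of c(s, s')`, where `c(s, s') = γ(s)` if `s` is a leader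
node and `c(s, s') = max(γ(s), max_{s'' child of s, s'' ≠ s'} μ(s''))` if `s` is a
follower node.  Then a terminal node `z` is a possible outcome — reachable from the root
under some pure leader strategy together with a pure follower best response to it — iff
`u2(z) ≥ γ(z)`; consequently the leader's Stackelberg value in pure strategies (with ties
among follower best responses broken in favor of the leader) equals
`max { u1(z) : z terminal, u2(z) ≥ γ(z) }`. -/
theorem possible_outcome_iff_capacity (G : DAGGame V) (μ : V → ℝ)
    (hμ : ∀ v, μ v =
      sInf {x : ℝ | ∃ π1 : G.Strat,
        x = sSup {y : ℝ | ∃ π2 : G.Strat, y = G.u2 (G.play π1 π2 v)}})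
    (γ : V → EReal)
    (hγroot : γ G.root = ⊥)
    (hγ : ∀ s' : V, s' ≠ G.root → γ s' =
      sInf {c : EReal | ∃ s : V, s' ∈ G.succ s ∧ c =
        if G.owner s = 0 then γ s
        else max (γ s)
          (sSup {x : EReal | ∃ s'' ∈ G.succ s, s'' ≠ s' ∧ x = ((μ s'' : ℝ) : EReal)})}) :
    (∀ z : V, G.succ z = ∅ →
      ((∃ π1 π2 : G.Strat, G.BestResponse π1 π2 ∧ G.play π1 π2 G.root = z) ↔
        γ z ≤ ((G.u2 z : ℝ) : EReal))) ∧
    (∀ x : ℝ,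
      IsGreatest {y : ℝ | ∃ π1 π2 : G.Strat,
        G.BestResponse π1 π2 ∧ y = G.u1 (G.play π1 π2 G.root)} x ↔
      IsGreatest {y : ℝ | ∃ z : V, G.succ z = ∅ ∧ γ z ≤ ((G.u2 z : ℝ) : EReal) ∧
        y = G.u1 z} x) := by
  have part1 : ∀ z : V, G.succ z = ∅ →
      ((∃ π1 π2 : G.Strat, G.BestResponse π1 π2 ∧ G.play π1 π2 G.root = z) ↔
        γ z ≤ ((G.u2 z : ℝ) : EReal)) := by
    intro z hz
    constructor
    · rintro ⟨π1, π2, hbr, hplay⟩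
      exact G.capacity_of_outcome μ hμ γ hγroot hγ z π1 π2 hbr hplay
    · intro hcap
      obtain ⟨k, w, h0, hk, hedge, hfol⟩ := G.exists_goodPath μ γ hγ (G.u2 z) z hcap
      exact G.outcome_of_goodPath μ hμ z hz k w h0 hk hedge hfol
  refine ⟨part1, ?_⟩
  have hset : {y : ℝ | ∃ π1 π2 : G.Strat,
        G.BestResponse π1 π2 ∧ y = G.u1 (G.play π1 π2 G.root)} =
      {y : ℝ | ∃ z : V, G.succ z = ∅ ∧ γ z ≤ ((G.u2 z : ℝ) : EReal) ∧ y = G.u1 z} := by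
    ext y
    constructor
    · rintro ⟨π1, π2, hbr, rfl⟩
      have hz : G.succ (G.play π1 π2 G.root) = ∅ := G.play_succ_empty π1 π2 G.root
      have hcap := (part1 _ hz).mp ⟨π1, π2, hbr, rfl⟩
      exact ⟨_, hz, hcap, rfl⟩
    · rintro ⟨z, hz, hcap, rfl⟩
      obtain ⟨π1, π2, hbr, hp⟩ := (part1 z hz).mpr hcap
      exact ⟨π1, π2, hbr, by rw [hp]⟩
  intro x
  rw [hset]

end DAGGame
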